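/- Let f: ℝⁿ → ℝ be twice continuously differentiable with M-Lipschitz Hessian, and suppose d satisfies (∇²f(x) + μI)d = -∇f(x) for some μ ≥ 0. Then ‖∇f(x+d)‖ ≤ (M/2)‖d‖² + μ‖d‖. -/

import Mathlib

open Real
open scoped RealInnerProductSpace

/-- If `f` is twice continuously differentiable with `M`-Lipschitz Hessian and
`(∇²f(x) + μI) d = -∇f(x)` with `μ ≥ 0`, then `‖∇f(x+d)‖ ≤ (M/2)‖d‖² + μ‖d‖`. -/
theorem stmt0 {n : ℕ} (f : EuclideanSpace ℝ (Fin n) → ℝ) (M μ : ℝ)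
    (x d : EuclideanSpace ℝ (Fin n))
    (hf : ContDiff ℝ 2 f) (hM : 0 < M)
    (hLip : ∀ u v : EuclideanSpace ℝ (Fin n),
      ‖fderiv ℝ (gradient f) u - fderiv ℝ (gradient f) v‖ ≤ M * ‖u - v‖)
    (hμ : 0 ≤ μ)
    (heq : (fderiv ℝ (gradient f) x) d + μ • d = - gradient f x) :
    ‖gradient f (x + d)‖ ≤ M / 2 * ‖d‖ ^ 2 + μ * ‖d‖ := by
  set g := gradient f with hgdef
  have hg1 : ContDiff ℝ 1 g := by
    have h1 : ContDiff ℝ 1 (fderiv ℝ f) := hf.fderiv_right (by norm_num)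
    exact (InnerProductSpace.toDual ℝ
      (EuclideanSpace ℝ (Fin n))).symm.contDiff.comp h1
  have hgd : Differentiable ℝ g := hg1.differentiable one_ne_zero
  have hfc : Continuous (fderiv ℝ g) := (hg1.fderiv_right (m := 0) le_rfl).continuous
  have hline : Continuous fun t : ℝ => x + t • d :=
    continuous_const.add (continuous_id.smul continuous_const)
  have hcont : Continuous (fun t : ℝ => fderiv ℝ g (x + t • d) d) :=
    (hfc.comp hline).clm_apply continuous_const
  have hφ : ∀ t : ℝ, HasDerivAt (fun s : ℝ => g (x + s • d)) (fderiv ℝ g (x + t • d) d) t := by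
    intro t
    have h1 : HasDerivAt (fun s : ℝ => x + s • d) d t := by
      simpa using ((hasDerivAt_id t).smul_const d).const_add x
    exact (hgd (x + t • d)).hasFDerivAt.comp_hasDerivAt t h1
  have hint : (∫ t in (0:ℝ)..1, fderiv ℝ g (x + t • d) d) = g (x + d) - g x := by
    have := intervalIntegral.integral_eq_sub_of_hasDerivAt
      (fun t _ => hφ t) (hcont.intervalIntegrable 0 1)
    simpa using this
  have key : g (x + d) - g x - fderiv ℝ g x d
      = ∫ t in (0:ℝ)..1, (fderiv ℝ g (x + t • d) d - fderiv ℝ g x d) := by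
    rw [intervalIntegral.integral_sub (hcont.intervalIntegrable 0 1)
      (intervalIntegrable_const), hint]
    simp
  have hb : ‖g (x + d) - g x - fderiv ℝ g x d‖ ≤ M / 2 * ‖d‖ ^ 2 := by
    rw [key]
    have hpt : ∀ t ∈ Set.Icc (0:ℝ) 1,
        ‖fderiv ℝ g (x + t • d) d - fderiv ℝ g x d‖ ≤ M * ‖d‖ ^ 2 * t := by
      intro t ht
      have h1 : ‖fderiv ℝ g (x + t • d) d - fderiv ℝ g x d‖
          = ‖(fderiv ℝ g (x + t • d) - fderiv ℝ g x) d‖ := by simp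
      rw [h1]
      calc ‖(fderiv ℝ g (x + t • d) - fderiv ℝ g x) d‖
          ≤ ‖fderiv ℝ g (x + t • d) - fderiv ℝ g x‖ * ‖d‖ :=
            ContinuousLinearMap.le_opNorm _ _
        _ ≤ (M * ‖x + t • d - x‖) * ‖d‖ := by
            gcongr; exact hLip _ _
        _ = M * ‖d‖ ^ 2 * t := by
            have : x + t • d - x = t • d := by abel
            rw [this, norm_smul, Real.norm_eq_abs, abs_of_nonneg ht.1]
            ring
    calc ‖∫ t in (0:ℝ)..1, (fderiv ℝ g (x + t • d) d - fderiv ℝ g x d)‖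
        ≤ ∫ t in (0:ℝ)..1, ‖fderiv ℝ g (x + t • d) d - fderiv ℝ g x d‖ :=
          intervalIntegral.norm_integral_le_integral_norm zero_le_one
      _ ≤ ∫ t in (0:ℝ)..1, M * ‖d‖ ^ 2 * t := by
          apply intervalIntegral.integral_mono_on zero_le_one
          · exact (hcont.sub continuous_const).norm.intervalIntegrable 0 1
          · exact ((continuous_const.mul continuous_id).intervalIntegrable 0 1)
          · exact hpt
      _ = M / 2 * ‖d‖ ^ 2 := by
          rw [intervalIntegral.integral_const_mul, integral_id]
          ring
  have h2 : fderiv ℝ g x d + g x = -(μ • d) := by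
    have : fderiv ℝ g x d = - g x - μ • d := by
      rw [← heq]; abel
    rw [this]; abel
  have hsplit : g (x + d)
      = (g (x + d) - g x - fderiv ℝ g x d) + (fderiv ℝ g x d + g x) := by abel
  rw [hsplit]
  refine (norm_add_le _ _).trans ?_
  rw [h2]
  have : ‖-(μ • d)‖ = μ * ‖d‖ := by
    rw [norm_neg, norm_smul, Real.norm_eq_abs, abs_of_nonneg hμ]
  rw [this]
  gcongr
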